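/- Let Y be a p-dimensional random vector with mean μ and positive-definite covariance Σ_0, and let Σ_j be another positive-definite matrix with Σ_j ≠ Σ_0. If 2·tr(V) < tr(VᵀV), where V = W_0^{-1}(W_0 − W_j) for lower-triangular Cholesky factors W_0, W_j of Σ_0^{-1} and Σ_j^{-1}, then E[(Y − μ)ᵀ Σ_j^{-1}(Y − μ)] > E[(Y − μ)ᵀ Σ_0^{-1}(Y − μ)] = p. -/
import Mathlib


open MeasureTheory Matrix

/-- Unbiasedness of the Mahalanobis classifier with identical means: if
`2 tr(V) < tr(Vᵀ V)` where `V = W0⁻¹(W0 − Wj)`, then the expected squared Mahalanobis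
distance using the wrong covariance `Sj` strictly exceeds the one using the true
covariance `S0`, which equals `p`. -/
theorem mahalanobis_unbiased_same_mean
    {Ω : Type*} [MeasurableSpace Ω] (μ : Measure Ω) [IsProbabilityMeasure μ]
    {p : ℕ} (Y : Ω → (Fin p → ℝ)) (m : Fin p → ℝ)
    (S0 Sj W0 Wj : Matrix (Fin p) (Fin p) ℝ)
    (hS0 : S0.PosDef) (hSj : Sj.PosDef) (hne : Sj ≠ S0)
    (hW0 : S0⁻¹ = W0 * W0ᵀ) (hWj : Sj⁻¹ = Wj * Wjᵀ)
    (hW0lt : ∀ i j : Fin p, i < j → W0 i j = 0)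
    (hWjlt : ∀ i j : Fin p, i < j → Wj i j = 0)
    (hmean : ∀ l, ∫ ω, Y ω l ∂μ = m l)
    (hcov : ∀ l k, ∫ ω, (Y ω l - m l) * (Y ω k - m k) ∂μ = S0 l k)
    (hint : ∀ l k, Integrable (fun ω => (Y ω l - m l) * (Y ω k - m k)) μ)
    (V : Matrix (Fin p) (Fin p) ℝ) (hV : V = W0⁻¹ * (W0 - Wj))
    (htr : 2 * Matrix.trace V < Matrix.trace (Vᵀ * V)) :
    (∫ ω, (Y ω - m) ⬝ᵥ (S0⁻¹ *ᵥ (Y ω - m)) ∂μ <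
        ∫ ω, (Y ω - m) ⬝ᵥ (Sj⁻¹ *ᵥ (Y ω - m)) ∂μ) ∧
      ∫ ω, (Y ω - m) ⬝ᵥ (S0⁻¹ *ᵥ (Y ω - m)) ∂μ = (p : ℝ) := by
  have hS0det : IsUnit S0.det := isUnit_iff_ne_zero.2 hS0.det_pos.ne'
  -- symmetry of S0 from hcov
  have hsym : ∀ l k, S0 k l = S0 l k := by
    intro l k
    rw [← hcov k l, ← hcov l k]
    congr 1; funext ω; ring
  -- the quadratic-form expectation equals trace (A * S0)
  have hquad : ∀ A : Matrix (Fin p) (Fin p) ℝ,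
      ∫ ω, (Y ω - m) ⬝ᵥ (A *ᵥ (Y ω - m)) ∂μ = Matrix.trace (A * S0) := by
    intro A
    have h1 : ∀ ω, (Y ω - m) ⬝ᵥ (A *ᵥ (Y ω - m))
        = ∑ l, ∑ k, A l k * ((Y ω l - m l) * (Y ω k - m k)) := by
      intro ω
      simp only [dotProduct, Matrix.mulVec, Pi.sub_apply, Finset.mul_sum]
      exact Finset.sum_congr rfl fun l _ => Finset.sum_congr rfl fun k _ => by ring
    simp only [h1]
    rw [integral_finset_sum _ (fun l _ => integrable_finset_sum _
      (fun k _ => (hint l k).const_mul (A l k)))]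
    have : ∀ l ∈ Finset.univ, (∫ ω, ∑ k, A l k * ((Y ω l - m l) * (Y ω k - m k)) ∂μ)
        = ∑ k, A l k * S0 l k := by
      intro l _
      rw [integral_finset_sum _ (fun k _ => (hint l k).const_mul (A l k))]
      exact Finset.sum_congr rfl fun k _ => by rw [integral_const_mul, hcov]
    rw [Finset.sum_congr rfl this]
    simp only [Matrix.trace, Matrix.diag, Matrix.mul_apply]
    exact Finset.sum_congr rfl fun l _ => Finset.sum_congr rfl fun k _ => by
      rw [hsym l k]
  have e0 : ∫ ω, (Y ω - m) ⬝ᵥ (S0⁻¹ *ᵥ (Y ω - m)) ∂μ = (p : ℝ) := by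
    rw [hquad, Matrix.nonsing_inv_mul S0 hS0det, Matrix.trace_one]
    simp
  -- W0 is invertible
  have hW0det : IsUnit W0.det := by
    have h : (S0⁻¹).det ≠ 0 := hS0.inv.det_pos.ne'
    rw [hW0, Matrix.det_mul, Matrix.det_transpose] at h
    exact isUnit_iff_ne_zero.2 fun h0 => h (by rw [h0, zero_mul])
  -- S0 in terms of W0
  have hS0eq : S0 = (W0ᵀ)⁻¹ * W0⁻¹ := by
    rw [← Matrix.mul_inv_rev, ← hW0, Matrix.nonsing_inv_nonsing_inv S0 hS0det]
  set U : Matrix (Fin p) (Fin p) ℝ := W0⁻¹ * Wj with hU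
  have hUV : U = 1 - V := by
    rw [hU, hV, Matrix.mul_sub, Matrix.nonsing_inv_mul W0 hW0det, sub_sub_cancel]
  have htrace : Matrix.trace (Sj⁻¹ * S0) = (p : ℝ)
      + (Matrix.trace (Vᵀ * V) - 2 * Matrix.trace V) := by
    have h1 : Sj⁻¹ * S0 = Wj * Wjᵀ * ((W0ᵀ)⁻¹ * W0⁻¹) := by rw [hWj, hS0eq]
    have h2 : Matrix.trace (Sj⁻¹ * S0) = Matrix.trace (U * Uᵀ) := by
      have h3 : Wj * Wjᵀ * (W0ᵀ⁻¹ * W0⁻¹) = (Wj * (Wjᵀ * W0ᵀ⁻¹)) * W0⁻¹ := by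
        noncomm_ring
      rw [h1, h3, Matrix.trace_mul_comm]
      congr 1
      rw [hU, Matrix.transpose_mul, Matrix.transpose_nonsing_inv]
      noncomm_ring
    rw [h2, hUV]
    have hexp : (1 - V) * (1 - V)ᵀ = 1 - Vᵀ - V + V * Vᵀ := by
      rw [Matrix.transpose_sub, Matrix.transpose_one]
      noncomm_ring
    rw [hexp, Matrix.trace_add, Matrix.trace_sub, Matrix.trace_sub,
      Matrix.trace_one, Matrix.trace_transpose, Matrix.trace_mul_comm]
    simp only [Fintype.card_fin]
    ring
  refine ⟨?_, e0⟩
  rw [e0, hquad, htrace]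
  linarith
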